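/- Suppose V has dimension 3 over ℝ. Then for every element U of the Clifford algebra Cl(Q), the products involute(U)·reverse(U) and U·reverse(involute(U)) both lie in the center of Cl(Q); in particular involute(U)·reverse(U) = reverse(U)·involute(U) and U·reverse(involute(U)) = reverse(involute(U))·U. -/

import Mathlib

set_option maxHeartbeats 1000000

open CliffordAlgebra

private theorem key_center {V : Type*} [AddCommGroup V] [Module ℝ V] (Q : QuadraticForm ℝ V)
    (h : Module.finrank ℝ V = 3) (x : CliffordAlgebra Q) :
    x + reverse (involute x) ∈ Subalgebra.center ℝ (CliffordAlgebra Q) := by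
  have hfd : FiniteDimensional ℝ V := FiniteDimensional.of_finrank_pos (by omega)
  obtain ⟨v0, hv0⟩ := LinearMap.BilinForm.exists_orthogonal_basis
    (QuadraticForm.associated_isSymm ℝ Q)
  set v : Module.Basis (Fin 3) ℝ V := v0.reindex (finCongr h) with hvdef
  have horth : ∀ i j : Fin 3, i ≠ j → Q.IsOrtho (v i) (v j) := by
    intro i j hij
    have hne : (finCongr h).symm i ≠ (finCongr h).symm j := fun he => hij (by
      simpa using congrArg (finCongr h) he)
    have := hv0 hne
    rw [hvdef]
    simp only [Module.Basis.reindex_apply]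
    exact QuadraticMap.associated_isOrtho.mp this
  set a := ι Q (v 0) with hadef
  set b := ι Q (v 1) with hbdef
  set c := ι Q (v 2) with hcdef
  -- swap and square lemmas
  have hba : b * a = -(a * b) := ι_mul_ι_comm_of_isOrtho (horth 1 0 (by decide))
  have hca : c * a = -(a * c) := ι_mul_ι_comm_of_isOrtho (horth 2 0 (by decide))
  have hcb : c * b = -(b * c) := ι_mul_ι_comm_of_isOrtho (horth 2 1 (by decide))
  have hba' : ∀ y, b * (a * y) = -(a * (b * y)) := fun y => by
    rw [← mul_assoc, hba, neg_mul, mul_assoc]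
  have hca' : ∀ y, c * (a * y) = -(a * (c * y)) := fun y => by
    rw [← mul_assoc, hca, neg_mul, mul_assoc]
  have hcb' : ∀ y, c * (b * y) = -(b * (c * y)) := fun y => by
    rw [← mul_assoc, hcb, neg_mul, mul_assoc]
  have haa : a * a = Q (v 0) • (1 : CliffordAlgebra Q) := by
    rw [hadef, ι_sq_scalar, Algebra.algebraMap_eq_smul_one]
  have hbb : b * b = Q (v 1) • (1 : CliffordAlgebra Q) := by
    rw [hbdef, ι_sq_scalar, Algebra.algebraMap_eq_smul_one]
  have hcc : c * c = Q (v 2) • (1 : CliffordAlgebra Q) := by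
    rw [hcdef, ι_sq_scalar, Algebra.algebraMap_eq_smul_one]
  have haa' : ∀ y, a * (a * y) = Q (v 0) • y := fun y => by
    rw [← mul_assoc, hadef, ι_sq_scalar, ← Algebra.smul_def]
  have hbb' : ∀ y, b * (b * y) = Q (v 1) • y := fun y => by
    rw [← mul_assoc, hbdef, ι_sq_scalar, ← Algebra.smul_def]
  have hcc' : ∀ y, c * (c * y) = Q (v 2) • y := fun y => by
    rw [← mul_assoc, hcdef, ι_sq_scalar, ← Algebra.smul_def]
  set M : Submodule ℝ (CliffordAlgebra Q) :=
    Submodule.span ℝ ({1, a, b, c, a * b, a * c, b * c, a * (b * c)} :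
      Set (CliffordAlgebra Q)) with hMdef
  have hm1 : (1 : CliffordAlgebra Q) ∈ M := Submodule.subset_span (Set.mem_insert _ _)
  have hma : a ∈ M := Submodule.subset_span (Set.mem_insert_of_mem _ (Set.mem_insert _ _))
  have hmb : b ∈ M := Submodule.subset_span (Set.mem_insert_of_mem _ (Set.mem_insert_of_mem _ (Set.mem_insert _ _)))
  have hmc : c ∈ M := Submodule.subset_span (Set.mem_insert_of_mem _ (Set.mem_insert_of_mem _ (Set.mem_insert_of_mem _ (Set.mem_insert _ _))))
  have hmab : a * b ∈ M := Submodule.subset_span (Set.mem_insert_of_mem _ (Set.mem_insert_of_mem _ (Set.mem_insert_of_mem _ (Set.mem_insert_of_mem _ (Set.mem_insert _ _)))))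
  have hmac : a * c ∈ M := Submodule.subset_span (Set.mem_insert_of_mem _ (Set.mem_insert_of_mem _ (Set.mem_insert_of_mem _ (Set.mem_insert_of_mem _ (Set.mem_insert_of_mem _ (Set.mem_insert _ _))))))
  have hmbc : b * c ∈ M := Submodule.subset_span (Set.mem_insert_of_mem _ (Set.mem_insert_of_mem _ (Set.mem_insert_of_mem _ (Set.mem_insert_of_mem _ (Set.mem_insert_of_mem _ (Set.mem_insert_of_mem _ (Set.mem_insert _ _)))))))
  have hmabc : a * (b * c) ∈ M := Submodule.subset_span (Set.mem_insert_of_mem _ (Set.mem_insert_of_mem _ (Set.mem_insert_of_mem _ (Set.mem_insert_of_mem _ (Set.mem_insert_of_mem _ (Set.mem_insert_of_mem _ (Set.mem_insert_of_mem _ rfl)))))))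
  -- closure under right multiplication by generators
  have hMa : ∀ m ∈ M, m * a ∈ M := by
    intro m hm
    induction hm using Submodule.span_induction with
    | mem g hg =>
      simp only [Set.mem_insert_iff, Set.mem_singleton_iff] at hg
      rcases hg with rfl | rfl | rfl | rfl | rfl | rfl | rfl | rfl <;>
        (try simp only [mul_assoc, hba, hba', hca, hca', hcb, hcb', haa, haa', hbb, hbb', hcc, hcc',
          mul_neg, neg_mul, neg_neg, mul_smul_comm, smul_mul_assoc, smul_smul, smul_neg,
          one_mul, mul_one]) <;>
        apply_rules [Submodule.neg_mem, Submodule.smul_mem, hm1, hma, hmb, hmc, hmab, hmac,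
          hmbc, hmabc]
    | zero => simpa using M.zero_mem
    | add y z _ _ hy hz => rw [add_mul]; exact M.add_mem hy hz
    | smul r y _ hy => rw [smul_mul_assoc]; exact M.smul_mem r hy
  have hMb : ∀ m ∈ M, m * b ∈ M := by
    intro m hm
    induction hm using Submodule.span_induction with
    | mem g hg =>
      simp only [Set.mem_insert_iff, Set.mem_singleton_iff] at hg
      rcases hg with rfl | rfl | rfl | rfl | rfl | rfl | rfl | rfl <;>
        (try simp only [mul_assoc, hba, hba', hca, hca', hcb, hcb', haa, haa', hbb, hbb', hcc, hcc',
          mul_neg, neg_mul, neg_neg, mul_smul_comm, smul_mul_assoc, smul_smul, smul_neg,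
          one_mul, mul_one]) <;>
        apply_rules [Submodule.neg_mem, Submodule.smul_mem, hm1, hma, hmb, hmc, hmab, hmac,
          hmbc, hmabc]
    | zero => simpa using M.zero_mem
    | add y z _ _ hy hz => rw [add_mul]; exact M.add_mem hy hz
    | smul r y _ hy => rw [smul_mul_assoc]; exact M.smul_mem r hy
  have hMc : ∀ m ∈ M, m * c ∈ M := by
    intro m hm
    induction hm using Submodule.span_induction with
    | mem g hg =>
      simp only [Set.mem_insert_iff, Set.mem_singleton_iff] at hg
      rcases hg with rfl | rfl | rfl | rfl | rfl | rfl | rfl | rfl <;>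
        (try simp only [mul_assoc, hba, hba', hca, hca', hcb, hcb', haa, haa', hbb, hbb', hcc, hcc',
          mul_neg, neg_mul, neg_neg, mul_smul_comm, smul_mul_assoc, smul_smul, smul_neg,
          one_mul, mul_one]) <;>
        apply_rules [Submodule.neg_mem, Submodule.smul_mem, hm1, hma, hmb, hmc, hmab, hmac,
          hmbc, hmabc]
    | zero => simpa using M.zero_mem
    | add y z _ _ hy hz => rw [add_mul]; exact M.add_mem hy hz
    | smul r y _ hy => rw [smul_mul_assoc]; exact M.smul_mem r hy
  -- decomposition of ι
  have hι : ∀ w : V, ι Q w = v.repr w 0 • a + v.repr w 1 • b + v.repr w 2 • c := by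
    intro w
    conv_lhs => rw [← v.sum_repr w]
    rw [Fin.sum_univ_three, map_add, map_add, map_smul, map_smul, map_smul]
  -- M is all of the Clifford algebra
  have hMtop : ∀ y : CliffordAlgebra Q, ∀ m ∈ M, m * y ∈ M := by
    intro y
    induction y using CliffordAlgebra.induction with
    | algebraMap r =>
      intro m hm
      rw [← Algebra.commutes, ← Algebra.smul_def]
      exact M.smul_mem r hm
    | ι w =>
      intro m hm
      rw [hι w, mul_add, mul_add, mul_smul_comm, mul_smul_comm, mul_smul_comm]
      exact M.add_mem (M.add_mem (M.smul_mem _ (hMa m hm)) (M.smul_mem _ (hMb m hm)))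
        (M.smul_mem _ (hMc m hm))
    | mul y z hy hz =>
      intro m hm
      rw [← mul_assoc]
      exact hz _ (hy m hm)
    | add y z hy hz =>
      intro m hm
      rw [mul_add]
      exact M.add_mem (hy m hm) (hz m hm)
  have hxM : ∀ y : CliffordAlgebra Q, y ∈ M := fun y => by
    simpa using hMtop y 1 hm1
  -- the pseudoscalar is central
  have hωa : a * (a * (b * c)) = (a * (b * c)) * a := by
    simp only [mul_assoc, hba, hba', hca, hca', hcb, hcb', haa, haa', hbb, hbb', hcc, hcc',
      mul_neg, neg_mul, neg_neg, mul_smul_comm, smul_mul_assoc, smul_smul, smul_neg,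
      one_mul, mul_one]
  have hωb : b * (a * (b * c)) = (a * (b * c)) * b := by
    simp only [mul_assoc, hba, hba', hca, hca', hcb, hcb', haa, haa', hbb, hbb', hcc, hcc',
      mul_neg, neg_mul, neg_neg, mul_smul_comm, smul_mul_assoc, smul_smul, smul_neg,
      one_mul, mul_one]
  have hωc : c * (a * (b * c)) = (a * (b * c)) * c := by
    simp only [mul_assoc, hba, hba', hca, hca', hcb, hcb', haa, haa', hbb, hbb', hcc, hcc',
      mul_neg, neg_mul, neg_neg, mul_smul_comm, smul_mul_assoc, smul_smul, smul_neg,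
      one_mul, mul_one]
  have hω : a * (b * c) ∈ Subalgebra.center ℝ (CliffordAlgebra Q) := by
    rw [Subalgebra.mem_center_iff]
    intro y
    induction y using CliffordAlgebra.induction with
    | algebraMap r => exact Algebra.commutes r _
    | ι w =>
      rw [hι w, add_mul, add_mul, mul_add, mul_add, smul_mul_assoc, smul_mul_assoc,
        smul_mul_assoc, mul_smul_comm, mul_smul_comm, mul_smul_comm, hωa, hωb, hωc]
    | mul y z hy hz => rw [mul_assoc, hz, ← mul_assoc, hy, mul_assoc]
    | add y z hy hz => rw [add_mul, mul_add, hy, hz]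
  -- conjugation of the generators
  have hconja : reverse (involute a) = -a := by
    rw [hadef]; simp
  have hconjb : reverse (involute b) = -b := by
    rw [hbdef]; simp
  have hconjc : reverse (involute c) = -c := by
    rw [hcdef]; simp
  have hconjab : reverse (involute (a * b)) = -(a * b) := by
    rw [map_mul, reverse.map_mul, hconja, hconjb, neg_mul_neg, hba]
  have hconjac : reverse (involute (a * c)) = -(a * c) := by
    rw [map_mul, reverse.map_mul, hconja, hconjc, neg_mul_neg, hca]
  have hconjbc : reverse (involute (b * c)) = -(b * c) := by
    rw [map_mul, reverse.map_mul, hconjb, hconjc, neg_mul_neg, hcb]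
  have hconjabc : reverse (involute (a * (b * c))) = a * (b * c) := by
    simp only [map_mul, reverse.map_mul, hconja, hconjb, hconjc, mul_neg, neg_mul, neg_neg,
      mul_assoc, hba, hba', hca, hca', hcb, hcb']
  -- conjugation-invariance statement on M
  have hconj : ∀ m ∈ M, m + reverse (involute m) ∈ Subalgebra.center ℝ (CliffordAlgebra Q) := by
    intro m hm
    induction hm using Submodule.span_induction with
    | mem g hg =>
      simp only [Set.mem_insert_iff, Set.mem_singleton_iff] at hg
      rcases hg with rfl | rfl | rfl | rfl | rfl | rfl | rfl | rfl
      · rw [map_one, reverse.map_one]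
        exact Subalgebra.add_mem _ (Subalgebra.one_mem _) (Subalgebra.one_mem _)
      · rw [hconja, add_neg_cancel]; exact Subalgebra.zero_mem _
      · rw [hconjb, add_neg_cancel]; exact Subalgebra.zero_mem _
      · rw [hconjc, add_neg_cancel]; exact Subalgebra.zero_mem _
      · rw [hconjab, add_neg_cancel]; exact Subalgebra.zero_mem _
      · rw [hconjac, add_neg_cancel]; exact Subalgebra.zero_mem _
      · rw [hconjbc, add_neg_cancel]; exact Subalgebra.zero_mem _
      · rw [hconjabc]; exact Subalgebra.add_mem _ hω hω
    | zero =>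
      simpa using Subalgebra.zero_mem (Subalgebra.center ℝ (CliffordAlgebra Q))
    | add y z _ _ hy hz =>
      rw [map_add, map_add, add_add_add_comm]
      exact Subalgebra.add_mem _ hy hz
    | smul r y _ hy =>
      rw [map_smul, map_smul, ← smul_add]
      exact Subalgebra.smul_mem _ hy r
  exact hconj x (hxM x)

private theorem central_of_conj_fixed {V : Type*} [AddCommGroup V] [Module ℝ V]
    (Q : QuadraticForm ℝ V) (h : Module.finrank ℝ V = 3) (z : CliffordAlgebra Q)
    (hz : reverse (involute z) = z) : z ∈ Subalgebra.center ℝ (CliffordAlgebra Q) := by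
  have h2 := key_center Q h z
  rw [hz] at h2
  have hzz : z = (2⁻¹ : ℝ) • (z + z) := by
    rw [← two_smul ℝ z, smul_smul]
    norm_num
  rw [hzz]
  exact Subalgebra.smul_mem _ h2 _

private theorem comm_trick {V : Type*} [AddCommGroup V] [Module ℝ V]
    (Q : QuadraticForm ℝ V) (h : Module.finrank ℝ V = 3) (x : CliffordAlgebra Q) :
    x * reverse (involute x) = reverse (involute x) * x := by
  have hp := key_center Q h x
  have hcomm : x * (x + reverse (involute x)) = (x + reverse (involute x)) * x :=
    Subalgebra.mem_center_iff.mp hp x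
  have hrw : reverse (involute x) = (x + reverse (involute x)) - x := by
    rw [add_sub_cancel_left]
  rw [hrw, mul_sub, sub_mul, hcomm]

theorem stmt_13 {V : Type*} [AddCommGroup V] [Module ℝ V] (Q : QuadraticForm ℝ V)
    (h : Module.finrank ℝ V = 3) (U : CliffordAlgebra Q) :
    involute U * reverse U ∈ Subalgebra.center ℝ (CliffordAlgebra Q) ∧
    U * reverse (involute U) ∈ Subalgebra.center ℝ (CliffordAlgebra Q) ∧
    involute U * reverse U = reverse U * involute U ∧
    U * reverse (involute U) = reverse (involute U) * U := by
  have hcc : ∀ y : CliffordAlgebra Q, reverse (involute (reverse (involute y))) = y := by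
    intro y
    simp only [reverse_involute, reverse_reverse, involute_involute]
  refine ⟨?_, ?_, ?_, ?_⟩
  · apply central_of_conj_fixed Q h
    rw [map_mul, reverse.map_mul, involute_involute, reverse_involute, reverse_reverse]
  · apply central_of_conj_fixed Q h
    rw [map_mul, reverse.map_mul, hcc]
  · simpa [involute_involute] using comm_trick Q h (involute U)
  · exact comm_trick Q h U
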